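/- Let g, μ, r, δ > 0, s, τ, ζ ≥ 0 and Ω ∈ (0,1) be reals, and suppose: (i) s·(r − τ − ζ) = g; (ii) g = [ s·(r − τ − ζ) + r/μ ]·(1 − e^{−g·T}) for some T > 0; and (iii) T = (1/g)·log(1 + g·(1−Ω)/δ). Then e^{g·T} = 1 + g·μ/r, and consequently r = δ·μ/(1 − Ω). -/

import Mathlib

/-- Steady-state rate-of-profit formula (paper equation (33b)): from the Cambridge
equation, the circuit-of-capital relation and the stationary production time, it follows
that e^{gT} = 1 + gμ/r and hence r = δμ/(1−Ω). -/
theorem steady_state_rate_of_profit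
    (g μ r δ s τ ζ Ω T : ℝ)
    (hg : 0 < g) (hμ : 0 < μ) (hr : 0 < r) (hδ : 0 < δ)
    (hs : 0 ≤ s) (hτ : 0 ≤ τ) (hζ : 0 ≤ ζ) (hΩ : Ω ∈ Set.Ioo (0:ℝ) 1)
    (hT : 0 < T)
    (hcam : s * (r - τ - ζ) = g)
    (hcirc : g = (s * (r - τ - ζ) + r / μ) * (1 - Real.exp (-g * T)))
    (htime : T = (1 / g) * Real.log (1 + g * (1 - Ω) / δ)) :
    Real.exp (g * T) = 1 + g * μ / r ∧ r = δ * μ / (1 - Ω) := by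
  obtain ⟨hΩ0, hΩ1⟩ := hΩ
  have hΩ' : (0:ℝ) < 1 - Ω := by linarith
  have harg : (0:ℝ) < 1 + g * (1 - Ω) / δ := by positivity
  have hgT : g * T = Real.log (1 + g * (1 - Ω) / δ) := by
    rw [htime]; field_simp
  have hexp : Real.exp (g * T) = 1 + g * (1 - Ω) / δ := by
    rw [hgT, Real.exp_log harg]
  have hepos : (0:ℝ) < Real.exp (g * T) := Real.exp_pos _
  have hneg : Real.exp (-g * T) = (Real.exp (g * T))⁻¹ := by
    rw [← Real.exp_neg]; ring_nf
  rw [hcam, hneg] at hcirc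
  -- hcirc : g = (g + r/μ) * (1 - (exp (g*T))⁻¹)
  set E := Real.exp (g * T) with hE
  have hEne : E ≠ 0 := ne_of_gt hepos
  have key : E = 1 + g * μ / r := by
    field_simp at hcirc
    have h5 : r * E = g * μ + r := by nlinarith [hcirc]
    field_simp
    nlinarith [h5]
  refine ⟨key, ?_⟩
  have h2 : 1 + g * (1 - Ω) / δ = 1 + g * μ / r := by rw [← hexp, key]
  have h3 : g * (1 - Ω) / δ = g * μ / r := by linarith
  have h4 : g * (1 - Ω) * r = g * μ * δ := by
    field_simp at h3; linear_combination g * h3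
  field_simp
  nlinarith [h4]
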